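/- Let d be a positive integer, let A be a real number, and let l⁰, l^∞, w⁰, w^∞ be positive integers. Define f(b) as the real polynomial f(b) = (w⁰)^{2(d+1)}·b^{2d+3}·(A·l^∞ + l⁰(d+1)w^∞ − b(d+1)l⁰w⁰) − (w⁰)^{d+2}(w^∞)^{d}·b^{d+3}·(d+1)·(A(d+1)l^∞ − l⁰((d+1)w⁰ + (d+2)w^∞)) + (w⁰)^{d+1}(w^∞)^{d+1}·b^{d+2}·(2Ad(d+2)l^∞ − (d+1)(2d+3)l⁰(w⁰ + w^∞)) − (w⁰)^{d}(w^∞)^{d+2}·b^{d+1}·(d+1)·(A(d+1)l^∞ − l⁰((d+2)w⁰ + (d+1)w^∞)) + (w^∞)^{2(d+1)}·(b·(A·l^∞ + l⁰(d+1)w⁰) − (d+1)l⁰w^∞). Then f is a nonzero polynomial of degree 2d+4, and the number of distinct real roots of f different from w^∞/w⁰ is at most 2d+1. -/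

import Mathlib

open Polynomial

/-- The polynomial `f(b)` of Equation (functionf), as an element of `ℝ[b]`. -/
noncomputable def F (d : ℕ) (A : ℝ) (l0 linf w0 winf : ℕ) : Polynomial ℝ :=
  C ((w0:ℝ)^(2*(d+1))) * X^(2*d+3) *
      (C (A*(linf:ℝ) + (l0:ℝ)*((d:ℝ)+1)*(winf:ℝ)) - C (((d:ℝ)+1)*(l0:ℝ)*(w0:ℝ)) * X)
    - C ((w0:ℝ)^(d+2) * (winf:ℝ)^d * ((d:ℝ)+1) *
        (A*((d:ℝ)+1)*(linf:ℝ) - (l0:ℝ)*(((d:ℝ)+1)*(w0:ℝ) + ((d:ℝ)+2)*(winf:ℝ)))) * X^(d+3)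
    + C ((w0:ℝ)^(d+1) * (winf:ℝ)^(d+1) *
        (2*A*(d:ℝ)*((d:ℝ)+2)*(linf:ℝ) - ((d:ℝ)+1)*(2*(d:ℝ)+3)*(l0:ℝ)*((w0:ℝ)+(winf:ℝ)))) * X^(d+2)
    - C ((w0:ℝ)^d * (winf:ℝ)^(d+2) * ((d:ℝ)+1) *
        (A*((d:ℝ)+1)*(linf:ℝ) - (l0:ℝ)*(((d:ℝ)+2)*(w0:ℝ) + ((d:ℝ)+1)*(winf:ℝ)))) * X^(d+1)
    + C ((winf:ℝ)^(2*(d+1))) *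
      (C (A*(linf:ℝ) + (l0:ℝ)*((d:ℝ)+1)*(w0:ℝ)) * X - C (((d:ℝ)+1)*(l0:ℝ)*(winf:ℝ)))

/-- `F` written as an explicit linear combination of monomials. -/
lemma F_eq (d : ℕ) (A : ℝ) (l0 linf w0 winf : ℕ) :
    F d A l0 linf w0 winf =
      - C ((w0:ℝ)^(2*(d+1)) * (((d:ℝ)+1)*(l0:ℝ)*(w0:ℝ))) * X^(2*d+4)
      + C ((w0:ℝ)^(2*(d+1)) * (A*(linf:ℝ) + (l0:ℝ)*((d:ℝ)+1)*(winf:ℝ))) * X^(2*d+3)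
      - C ((w0:ℝ)^(d+2) * (winf:ℝ)^d * ((d:ℝ)+1) *
          (A*((d:ℝ)+1)*(linf:ℝ) - (l0:ℝ)*(((d:ℝ)+1)*(w0:ℝ) + ((d:ℝ)+2)*(winf:ℝ)))) * X^(d+3)
      + C ((w0:ℝ)^(d+1) * (winf:ℝ)^(d+1) *
          (2*A*(d:ℝ)*((d:ℝ)+2)*(linf:ℝ) - ((d:ℝ)+1)*(2*(d:ℝ)+3)*(l0:ℝ)*((w0:ℝ)+(winf:ℝ)))) * X^(d+2)
      - C ((w0:ℝ)^d * (winf:ℝ)^(d+2) * ((d:ℝ)+1) *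
          (A*((d:ℝ)+1)*(linf:ℝ) - (l0:ℝ)*(((d:ℝ)+2)*(w0:ℝ) + ((d:ℝ)+1)*(winf:ℝ)))) * X^(d+1)
      + C ((winf:ℝ)^(2*(d+1)) * (A*(linf:ℝ) + (l0:ℝ)*((d:ℝ)+1)*(w0:ℝ))) * X
      - C ((winf:ℝ)^(2*(d+1)) * (((d:ℝ)+1)*(l0:ℝ)*(winf:ℝ))) := by
  unfold F
  simp only [C_mul]
  ring

set_option maxHeartbeats 1600000 in
/-- `F` has natural degree `2d+4`. -/
lemma F_natDegree (d : ℕ) (A : ℝ) (l0 linf w0 winf : ℕ)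
    (hl0 : 0 < l0) (hw0 : 0 < w0) :
    (F d A l0 linf w0 winf).natDegree = 2*d+4 := by
  rw [F_eq]
  have h2 : ¬(2*d+4 = d+3) := by omega
  have h3 : ¬(2*d+4 = d+2) := by omega
  have h4 : ¬(2*d+4 = d+1) := by omega
  have h5 : ¬(2*d+4 = 1) := by omega
  have hne : (w0:ℝ)^(2*(d+1)) * (((d:ℝ)+1)*(l0:ℝ)*(w0:ℝ)) ≠ 0 := by
    have hw : (0:ℝ) < w0 := by exact_mod_cast hw0
    have hl : (0:ℝ) < l0 := by exact_mod_cast hl0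
    positivity
  compute_degree!
  · simp only [h2, h3, h4, h5, if_neg, ite_false, add_zero, sub_zero]
    rw [← C_eq_natCast, coeff_C_zero]
    have hw : (0:ℝ) < w0 := by exact_mod_cast hw0
    have hl : (0:ℝ) < l0 := by exact_mod_cast hl0
    have hpos : (0:ℝ) < (w0:ℝ)^(2*(d+1)) * (((d:ℝ)+1)*(l0:ℝ)*(w0:ℝ)) := by positivity
    intro hc
    push_cast at hc
    nlinarith [hpos]
  all_goals omega

/-- `F` is nonzero. -/
lemma F_ne_zero (d : ℕ) (A : ℝ) (l0 linf w0 winf : ℕ)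
    (hl0 : 0 < l0) (hw0 : 0 < w0) :
    F d A l0 linf w0 winf ≠ 0 := by
  intro h
  have := F_natDegree d A l0 linf w0 winf hl0 hw0
  rw [h, natDegree_zero] at this
  omega

set_option maxHeartbeats 1600000 in
/-- `w^∞/w⁰` is a root of `F` of multiplicity at least 3. -/
lemma F_rootMultiplicity (d : ℕ) (hd : 0 < d) (A : ℝ) (l0 linf w0 winf : ℕ)
    (hl0 : 0 < l0) (hw0 : 0 < w0) :
    3 ≤ (F d A l0 linf w0 winf).rootMultiplicity ((winf:ℝ)/(w0:ℝ)) := by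
  obtain ⟨e, rfl⟩ : ∃ e, d = e + 1 := ⟨d - 1, by omega⟩
  have hu : ((w0:ℝ)) ≠ 0 := by positivity
  have key : ∀ m ≤ 2,
      (derivative^[m] (F (e+1) A l0 linf w0 winf)).IsRoot ((winf:ℝ)/(w0:ℝ)) := by
    have e1 : 2*(e+1)+4-1 = 2*(e+1)+3 := by omega
    have e2 : 2*(e+1)+3-1 = 2*(e+1)+2 := by omega
    have e3 : 2*(e+1)+2-1 = 2*(e+1)+1 := by omega
    have e4 : (e+1)+3-1 = (e+1)+2 := by omega
    have e5 : (e+1)+2-1 = (e+1)+1 := by omega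
    have e6 : (e+1)+1-1 = e+1 := by omega
    have e7 : (e+1)-1 = e := by omega
    intro m hm
    interval_cases m <;>
      · rw [F_eq]
        simp only [Function.iterate_zero, Function.iterate_one, Function.iterate_succ,
          Function.comp_apply, id_eq, IsRoot.def, derivative_sub, derivative_add,
          derivative_neg, derivative_C_mul, derivative_X_pow, derivative_X, derivative_C,
          e1, e2, e3, e4, e5, e6, e7, mul_zero, mul_one, sub_zero, zero_sub, add_zero,
          derivative_mul, derivative_natCast, zero_mul, zero_add, neg_neg, derivative_zero,
          eval_add, eval_sub, eval_neg, eval_mul, eval_pow, eval_X, eval_C, eval_natCast]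
        push_cast
        simp only [eval_zero, neg_zero, mul_zero, sub_zero, add_zero, div_pow]
        field_simp
        ring
  have := lt_rootMultiplicity_of_isRoot_iterate_derivative
    (F_ne_zero (e+1) A l0 linf w0 winf hl0 hw0) key
  omega

/-- `f` is nonzero of degree `2d+4`, and it has at most `2d+1` distinct real
roots different from `w^∞/w⁰`. -/
theorem stmt_11 (d : ℕ) (hd : 0 < d) (A : ℝ) (l0 linf w0 winf : ℕ)
    (hl0 : 0 < l0) (hlinf : 0 < linf) (hw0 : 0 < w0) (hwinf : 0 < winf) :
    F d A l0 linf w0 winf ≠ 0 ∧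
    (F d A l0 linf w0 winf).natDegree = 2*d+4 ∧
    {b : ℝ | (F d A l0 linf w0 winf).eval b = 0 ∧ b ≠ (winf:ℝ)/(w0:ℝ)}.encard
      ≤ ((2*d+1 : ℕ) : ℕ∞) := by
  have hF0 : F d A l0 linf w0 winf ≠ 0 := F_ne_zero d A l0 linf w0 winf hl0 hw0
  have hdeg : (F d A l0 linf w0 winf).natDegree = 2*d+4 :=
    F_natDegree d A l0 linf w0 winf hl0 hw0
  refine ⟨hF0, hdeg, ?_⟩
  set t : ℝ := (winf:ℝ)/(w0:ℝ) with ht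
  set R : Multiset ℝ := (F d A l0 linf w0 winf).roots with hR
  have hcard : Multiset.card R ≤ 2*d+4 := by
    rw [hR, ← hdeg]; exact card_roots' _
  have hcount : 3 ≤ R.count t := by
    rw [hR, count_roots]
    exact F_rootMultiplicity d hd A l0 linf w0 winf hl0 hw0
  -- the set of roots different from t is the finset `R.toFinset.erase t`
  have hset : {b : ℝ | (F d A l0 linf w0 winf).eval b = 0 ∧ b ≠ t}
      = ↑(R.toFinset.erase t) := by
    ext b
    simp only [Set.mem_setOf_eq, Finset.coe_erase, Set.mem_diff, Finset.mem_coe,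
      Multiset.mem_toFinset, hR, mem_roots hF0, IsRoot.def, Set.mem_singleton_iff]
  rw [hset, Set.encard_coe_eq_coe_finsetCard]
  have hrep : Multiset.replicate 3 t ≤ R := by
    rw [Multiset.le_iff_count]
    intro a
    rcases eq_or_ne a t with rfl | hne
    · simpa using hcount
    · simp [Multiset.count_replicate, hne]
  have hsub : R.toFinset.erase t ⊆ (R - Multiset.replicate 3 t).toFinset := by
    intro x hx
    rw [Finset.mem_erase, Multiset.mem_toFinset] at hx
    rw [Multiset.mem_toFinset, ← Multiset.count_pos, Multiset.count_sub,
      Multiset.count_replicate, if_neg (fun h => hx.1 h.symm)]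
    simpa [Multiset.count_pos] using hx.2
  have hle : (R.toFinset.erase t).card ≤ 2*d+1 := by
    calc (R.toFinset.erase t).card ≤ (R - Multiset.replicate 3 t).toFinset.card :=
          Finset.card_le_card hsub
      _ ≤ Multiset.card (R - Multiset.replicate 3 t) := Multiset.toFinset_card_le _
      _ = Multiset.card R - 3 := by rw [Multiset.card_sub hrep, Multiset.card_replicate]
      _ ≤ 2*d+1 := by omega
  exact_mod_cast Nat.cast_le.mpr hle
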